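/- Let H be a complex Hilbert space and (a_i)_{i∈ℕ} a sequence of bounded operators on H forming a bounded column operator. The set {a_i} fails to be strongly independent (i.e., there exists a nonzero (λ_i) ∈ ℓ² with ∑_i λ_i a_i = 0 in operator norm) if and only if the set J = {(ω(a_1), ω(a_2), …) : ω a weak*-continuous linear functional on B(H)} is not dense in ℓ². -/

import Mathlib

open scoped ComplexConjugate InnerProductSpace ENNReal
open Filter Topology

set_option linter.unusedSectionVars false
set_option maxHeartbeats 1600000

noncomputable def stmt2_il {H : Type*} (x y : ℕ → H) : ℕ → H :=
  fun k => if Even k then x (k / 2) else y (k / 2)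

lemma stmt2_il_even {H : Type*} (x y : ℕ → H) (k : ℕ) :
    stmt2_il x y (2 * k) = x k := by
  simp [stmt2_il, even_two_mul k, Nat.mul_div_cancel_left k (by norm_num : 0 < 2)]

lemma stmt2_il_odd {H : Type*} (x y : ℕ → H) (k : ℕ) :
    stmt2_il x y (2 * k + 1) = y k := by
  have h1 : ¬ Even (2 * k + 1) := by simp [Nat.even_add_one, even_two_mul k]
  have h2 : (2 * k + 1) / 2 = k := by omega
  simp [stmt2_il, h1, h2]

section Aux
variable {H : Type*} [NormedAddCommGroup H] [InnerProductSpace ℂ H] [CompleteSpace H]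

lemma stmt2_finset_bound (a : ℕ → H →L[ℂ] H) (C : ℝ)
    (hsum : ∀ ξ : H, Summable fun i => ‖a i ξ‖ ^ 2)
    (hcol : ∀ ξ : H, ∑' i, ‖a i ξ‖ ^ 2 ≤ C ^ 2 * ‖ξ‖ ^ 2)
    (μ : ℕ → ℂ) (t : Finset ℕ) (ξ : H) :
    ‖(∑ i ∈ t, μ i • a i) ξ‖ ≤ Real.sqrt (∑ i ∈ t, ‖μ i‖ ^ 2) * (|C| * ‖ξ‖) := by
  have h1 : ‖(∑ i ∈ t, μ i • a i) ξ‖ ≤ ∑ i ∈ t, ‖μ i‖ * ‖a i ξ‖ := by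
    rw [ContinuousLinearMap.sum_apply]
    refine (norm_sum_le _ _).trans (le_of_eq ?_)
    refine Finset.sum_congr rfl fun i _ => ?_
    simp [norm_smul]
  have h2 : (∑ i ∈ t, ‖μ i‖ * ‖a i ξ‖) ^ 2 ≤
      (∑ i ∈ t, ‖μ i‖ ^ 2) * ∑ i ∈ t, ‖a i ξ‖ ^ 2 :=
    Finset.sum_mul_sq_le_sq_mul_sq t _ _
  have h3 : ∑ i ∈ t, ‖a i ξ‖ ^ 2 ≤ C ^ 2 * ‖ξ‖ ^ 2 :=
    le_trans (Summable.sum_le_tsum t (fun i _ => by positivity) (hsum ξ)) (hcol ξ)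
  have h4 : ∑ i ∈ t, ‖μ i‖ * ‖a i ξ‖ ≤
      Real.sqrt ((∑ i ∈ t, ‖μ i‖ ^ 2) * (C ^ 2 * ‖ξ‖ ^ 2)) := by
    rw [show ∑ i ∈ t, ‖μ i‖ * ‖a i ξ‖ =
        Real.sqrt ((∑ i ∈ t, ‖μ i‖ * ‖a i ξ‖) ^ 2) from
      (Real.sqrt_sq (by positivity)).symm]
    exact Real.sqrt_le_sqrt (h2.trans (by
      have : (0:ℝ) ≤ ∑ i ∈ t, ‖μ i‖ ^ 2 := by positivity
      exact mul_le_mul_of_nonneg_left h3 this))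
  refine h1.trans (h4.trans (le_of_eq ?_))
  rw [Real.sqrt_mul (by positivity)]
  congr 1
  rw [show C ^ 2 * ‖ξ‖ ^ 2 = (|C| * ‖ξ‖) ^ 2 by rw [mul_pow, sq_abs],
    Real.sqrt_sq (by positivity)]

lemma stmt2_summable_op (a : ℕ → H →L[ℂ] H) (C : ℝ)
    (hsum : ∀ ξ : H, Summable fun i => ‖a i ξ‖ ^ 2)
    (hcol : ∀ ξ : H, ∑' i, ‖a i ξ‖ ^ 2 ≤ C ^ 2 * ‖ξ‖ ^ 2)
    (μ : ℕ → ℂ) (hμ : Summable fun i => ‖μ i‖ ^ 2) :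
    Summable (fun i => μ i • a i) := by
  rw [summable_iff_vanishing_norm]
  intro ε hε
  have hC1 : (0:ℝ) < |C| + 1 := by positivity
  obtain ⟨s, hs⟩ := summable_iff_vanishing_norm.1 hμ ((ε / (|C| + 1)) ^ 2) (by positivity)
  refine ⟨s, fun t ht => ?_⟩
  have hb : ‖∑ i ∈ t, μ i • a i‖ ≤ Real.sqrt (∑ i ∈ t, ‖μ i‖ ^ 2) * |C| := by
    refine ContinuousLinearMap.opNorm_le_bound _ (by positivity) fun ξ => ?_
    calc ‖(∑ i ∈ t, μ i • a i) ξ‖ ≤ Real.sqrt (∑ i ∈ t, ‖μ i‖ ^ 2) * (|C| * ‖ξ‖) :=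
          stmt2_finset_bound a C hsum hcol μ t ξ
      _ = Real.sqrt (∑ i ∈ t, ‖μ i‖ ^ 2) * |C| * ‖ξ‖ := by ring
  have hts : Real.sqrt (∑ i ∈ t, ‖μ i‖ ^ 2) < ε / (|C| + 1) := by
    have h5 := hs t ht
    rw [Real.norm_eq_abs, abs_of_nonneg (by positivity)] at h5
    calc Real.sqrt (∑ i ∈ t, ‖μ i‖ ^ 2) < Real.sqrt ((ε / (|C| + 1)) ^ 2) :=
          Real.sqrt_lt_sqrt (by positivity) h5
      _ = ε / (|C| + 1) := Real.sqrt_sq (by positivity)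
  calc ‖∑ i ∈ t, μ i • a i‖ ≤ Real.sqrt (∑ i ∈ t, ‖μ i‖ ^ 2) * |C| := hb
    _ ≤ Real.sqrt (∑ i ∈ t, ‖μ i‖ ^ 2) * (|C| + 1) := by
        have := Real.sqrt_nonneg (∑ i ∈ t, ‖μ i‖ ^ 2); nlinarith
    _ < (ε / (|C| + 1)) * (|C| + 1) := mul_lt_mul_of_pos_right hts hC1
    _ = ε := div_mul_cancel₀ ε (ne_of_gt hC1)

lemma stmt2_summable_inner_seq (T : H →L[ℂ] H) (ξ η : ℕ → H)
    (hξ : Summable fun k => ‖ξ k‖ ^ 2) (hη : Summable fun k => ‖η k‖ ^ 2) :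
    Summable fun k => (inner ℂ (η k) (T (ξ k)) : ℂ) := by
  apply Summable.of_norm
  refine Summable.of_nonneg_of_le (fun k => norm_nonneg _) (fun k => ?_)
    (((hη.add hξ).div_const 2).mul_left ‖T‖)
  have h1 := norm_inner_le_norm (𝕜 := ℂ) (η k) (T (ξ k))
  have h2 := (T).le_opNorm (ξ k)
  have h3 : ‖η k‖ * ‖ξ k‖ ≤ (‖η k‖ ^ 2 + ‖ξ k‖ ^ 2) / 2 := by
    nlinarith [sq_nonneg (‖η k‖ - ‖ξ k‖)]
  calc ‖(inner ℂ (η k) (T (ξ k)) : ℂ)‖ ≤ ‖η k‖ * ‖T (ξ k)‖ := h1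
    _ ≤ ‖η k‖ * (‖T‖ * ‖ξ k‖) := mul_le_mul_of_nonneg_left h2 (norm_nonneg _)
    _ = ‖T‖ * (‖η k‖ * ‖ξ k‖) := by ring
    _ ≤ ‖T‖ * ((‖η k‖ ^ 2 + ‖ξ k‖ ^ 2) / 2) :=
        mul_le_mul_of_nonneg_left h3 (norm_nonneg _)

lemma stmt2_omega_bound (T : H →L[ℂ] H) (ξ η : ℕ → H)
    (hξ : Summable fun k => ‖ξ k‖ ^ 2) (hη : Summable fun k => ‖η k‖ ^ 2) :
    ‖∑' k, (inner ℂ (η k) (T (ξ k)) : ℂ)‖ ≤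
      ‖T‖ * ∑' k, (‖η k‖ ^ 2 + ‖ξ k‖ ^ 2) / 2 := by
  rw [← tsum_mul_left]
  refine tsum_of_norm_bounded (((hη.add hξ).div_const 2).mul_left ‖T‖).hasSum fun k => ?_
  have h1 := norm_inner_le_norm (𝕜 := ℂ) (η k) (T (ξ k))
  have h2 := (T).le_opNorm (ξ k)
  have h3 : ‖η k‖ * ‖ξ k‖ ≤ (‖η k‖ ^ 2 + ‖ξ k‖ ^ 2) / 2 := by
    nlinarith [sq_nonneg (‖η k‖ - ‖ξ k‖)]
  calc ‖(inner ℂ (η k) (T (ξ k)) : ℂ)‖ ≤ ‖η k‖ * ‖T (ξ k)‖ := h1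
    _ ≤ ‖η k‖ * (‖T‖ * ‖ξ k‖) := mul_le_mul_of_nonneg_left h2 (norm_nonneg _)
    _ = ‖T‖ * (‖η k‖ * ‖ξ k‖) := by ring
    _ ≤ ‖T‖ * ((‖η k‖ ^ 2 + ‖ξ k‖ ^ 2) / 2) :=
        mul_le_mul_of_nonneg_left h3 (norm_nonneg _)

lemma stmt2_memlp_of_sq_summable (f : ℕ → ℂ) (hf : Summable fun i => ‖f i‖ ^ 2) :
    Memℓp f 2 := by
  apply memℓp_gen
  have h2 : ((2:ℝ≥0∞)).toReal = (2:ℝ) := by norm_num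
  have he : ∀ x : ℝ, x ^ (2:ℝ) = x ^ (2:ℕ) := fun x => by
    rw [show (2:ℝ) = ((2:ℕ):ℝ) by norm_num, Real.rpow_natCast]
  rw [h2]
  simp only [he]
  exact hf

lemma stmt2_sq_summable_of_memlp (f : lp (fun _ : ℕ => ℂ) 2) :
    Summable fun i => ‖f i‖ ^ 2 := by
  have h := lp.memℓp f
  rw [memℓp_gen_iff (by norm_num)] at h
  have h2 : ((2:ℝ≥0∞)).toReal = (2:ℝ) := by norm_num
  rw [h2] at h
  have he : ∀ x : ℝ, x ^ (2:ℝ) = x ^ (2:ℕ) := fun x => by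
    rw [show (2:ℝ) = ((2:ℕ):ℝ) by norm_num, Real.rpow_natCast]
  simp only [he] at h
  exact h

lemma stmt2_hasSum_zero (a : ℕ → H →L[ℂ] H) (lam : ℕ → ℂ) (v : ℕ → ℂ) (ξ η : ℕ → H)
    (hξ : Summable fun k => ‖ξ k‖ ^ 2) (hη : Summable fun k => ‖η k‖ ^ 2)
    (hv : ∀ i, v i = ∑' k, (inner ℂ (η k) (a i (ξ k)) : ℂ))
    (h0 : HasSum (fun i => lam i • a i) 0) :
    HasSum (fun i => lam i * v i) 0 := by
  have key : ∀ F : Finset ℕ, ∑ i ∈ F, lam i * v i =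
      ∑' k, (inner ℂ (η k) ((∑ i ∈ F, lam i • a i) (ξ k)) : ℂ) := by
    intro F
    have hpt : ∀ k, (inner ℂ (η k) ((∑ i ∈ F, lam i • a i) (ξ k)) : ℂ) =
        ∑ i ∈ F, lam i * (inner ℂ (η k) (a i (ξ k)) : ℂ) := by
      intro k
      rw [ContinuousLinearMap.sum_apply, inner_sum]
      exact Finset.sum_congr rfl fun i _ => by
        simp [ContinuousLinearMap.smul_apply, inner_smul_right]
    calc ∑ i ∈ F, lam i * v i
        = ∑ i ∈ F, ∑' k, lam i * (inner ℂ (η k) (a i (ξ k)) : ℂ) := by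
          refine Finset.sum_congr rfl fun i _ => ?_
          rw [tsum_mul_left, hv i]
      _ = ∑' k, ∑ i ∈ F, lam i * (inner ℂ (η k) (a i (ξ k)) : ℂ) :=
          (Summable.tsum_finsetSum fun i _ =>
            (stmt2_summable_inner_seq (a i) ξ η hξ hη).mul_left (lam i)).symm
      _ = _ := tsum_congr fun k => (hpt k).symm
  have htend : Tendsto (fun F : Finset ℕ => ∑ i ∈ F, lam i * v i) atTop (𝓝 0) := by
    refine squeeze_zero_norm (fun F => ?_)
      (a := fun F : Finset ℕ =>
        ‖∑ i ∈ F, lam i • a i‖ * ∑' k, (‖η k‖ ^ 2 + ‖ξ k‖ ^ 2) / 2) ?_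
    · rw [key F]
      exact stmt2_omega_bound _ ξ η hξ hη
    · have h1 : Tendsto (fun F : Finset ℕ => ‖∑ i ∈ F, lam i • a i‖) atTop (𝓝 0) := by
        simpa using Filter.Tendsto.norm h0
      simpa using h1.mul_const _
  exact htend

lemma stmt2_il_summable_sq (x y : ℕ → H)
    (hx : Summable fun k => ‖x k‖ ^ 2) (hy : Summable fun k => ‖y k‖ ^ 2) :
    Summable fun k => ‖stmt2_il x y k‖ ^ 2 := by
  apply Summable.even_add_odd
  · simpa [stmt2_il_even] using hx
  · simpa [stmt2_il_odd] using hy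

lemma stmt2_il_tsum (T : H →L[ℂ] H) (x1 y1 x2 y2 : ℕ → H)
    (hx1 : Summable fun k => ‖x1 k‖ ^ 2) (hy1 : Summable fun k => ‖y1 k‖ ^ 2)
    (hx2 : Summable fun k => ‖x2 k‖ ^ 2) (hy2 : Summable fun k => ‖y2 k‖ ^ 2) :
    ∑' k, (inner ℂ (stmt2_il y1 y2 k) (T (stmt2_il x1 x2 k)) : ℂ) =
      (∑' k, (inner ℂ (y1 k) (T (x1 k)) : ℂ)) + ∑' k, (inner ℂ (y2 k) (T (x2 k)) : ℂ) := by
  have h1 : HasSum (fun k => (inner ℂ (stmt2_il y1 y2 (2 * k)) (T (stmt2_il x1 x2 (2 * k))) : ℂ))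
      (∑' k, (inner ℂ (y1 k) (T (x1 k)) : ℂ)) := by
    simpa [stmt2_il_even] using (stmt2_summable_inner_seq T x1 y1 hx1 hy1).hasSum
  have h2 : HasSum
      (fun k => (inner ℂ (stmt2_il y1 y2 (2 * k + 1)) (T (stmt2_il x1 x2 (2 * k + 1))) : ℂ))
      (∑' k, (inner ℂ (y2 k) (T (x2 k)) : ℂ)) := by
    simpa [stmt2_il_odd] using (stmt2_summable_inner_seq T x2 y2 hx2 hy2).hasSum
  exact (HasSum.even_add_odd h1 h2).tsum_eq

lemma stmt2_rank_one_sq_summable (a : ℕ → H →L[ℂ] H)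
    (hsum : ∀ ξ : H, Summable fun i => ‖a i ξ‖ ^ 2) (ξ0 η0 : H) :
    Summable fun i => ‖(inner ℂ η0 (a i ξ0) : ℂ)‖ ^ 2 := by
  refine Summable.of_nonneg_of_le (fun i => by positivity) (fun i => ?_)
    ((hsum ξ0).mul_left (‖η0‖ ^ 2))
  have h := norm_inner_le_norm (𝕜 := ℂ) η0 (a i ξ0)
  calc ‖(inner ℂ η0 (a i ξ0) : ℂ)‖ ^ 2 ≤ (‖η0‖ * ‖a i ξ0‖) ^ 2 :=
        pow_le_pow_left₀ (norm_nonneg _) h 2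
    _ = ‖η0‖ ^ 2 * ‖a i ξ0‖ ^ 2 := mul_pow _ _ _

end Aux


/-- For a bounded column `(a i)` of operators on a Hilbert space `H`, the family
`{a i}` fails to be strongly independent (there is a nonzero `λ ∈ ℓ²` with `∑ i λ i • a i = 0`
in operator norm) if and only if the set
`J = {(ω(a₁), ω(a₂), …) : ω normal (weak*-continuous) functional on B(H)}` is not dense in `ℓ²`,
where normal functionals are those of the form `T ↦ ∑ₖ ⟪η k, T (ξ k)⟫` with
`∑ ‖ξ k‖², ∑ ‖η k‖² < ∞`. -/
theorem stmt2 {H : Type*} [NormedAddCommGroup H] [InnerProductSpace ℂ H] [CompleteSpace H]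
    (a : ℕ → H →L[ℂ] H) (C : ℝ)
    (hsum : ∀ ξ : H, Summable fun i => ‖a i ξ‖ ^ 2)
    (hcol : ∀ ξ : H, ∑' i, ‖a i ξ‖ ^ 2 ≤ C ^ 2 * ‖ξ‖ ^ 2) :
    (∃ lam : lp (fun _ : ℕ => ℂ) 2, lam ≠ 0 ∧ HasSum (fun i => lam i • a i) 0) ↔
      ¬ Dense {v : lp (fun _ : ℕ => ℂ) 2 |
          ∃ ξ η : ℕ → H, (Summable fun k => ‖ξ k‖ ^ 2) ∧ (Summable fun k => ‖η k‖ ^ 2) ∧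
            ∀ i, v i = ∑' k, (inner ℂ (η k) (a i (ξ k)) : ℂ)} := by
  classical
  set S := {v : lp (fun _ : ℕ => ℂ) 2 |
      ∃ ξ η : ℕ → H, (Summable fun k => ‖ξ k‖ ^ 2) ∧ (Summable fun k => ‖η k‖ ^ 2) ∧
        ∀ i, v i = ∑' k, (inner ℂ (η k) (a i (ξ k)) : ℂ)} with hSdef
  constructor
  · rintro ⟨lam, hlam, h0⟩ hD
    have hwm : Memℓp (fun i => conj (lam i)) 2 :=
      stmt2_memlp_of_sq_summable _ (by simpa using stmt2_sq_summable_of_memlp lam)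
    set w : lp (fun _ : ℕ => ℂ) 2 := ⟨fun i => conj (lam i), hwm⟩ with hwdef
    have hvanish : ∀ v ∈ S, (inner ℂ w v : ℂ) = 0 := by
      rintro v ⟨ξ, η, hξ, hη, hv⟩
      have hz : HasSum (fun i => lam i * v i) 0 :=
        stmt2_hasSum_zero a (fun i => lam i) (fun i => v i) ξ η hξ hη hv h0
      have h1 : (inner ℂ w v : ℂ) = ∑' i, conj (w i) * v i := by
        rw [lp.inner_eq_tsum]
        exact tsum_congr fun i => (RCLike.inner_apply _ _).trans (mul_comm _ _)
      rw [h1]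
      have h2 : ∀ i, conj (w i) * v i = lam i * v i := by
        intro i
        have h3 : w i = conj (lam i) := rfl
        rw [h3]
        simp
      rw [tsum_congr h2, hz.tsum_eq]
    have heq : (fun v : lp (fun _ : ℕ => ℂ) 2 => (inner ℂ w v : ℂ)) = fun _ => (0:ℂ) := by
      refine Continuous.ext_on hD ?_ continuous_const hvanish
      exact Continuous.inner continuous_const continuous_id
    have hww : (inner ℂ w w : ℂ) = 0 := congrFun heq w
    have hw0 : w = 0 := inner_self_eq_zero.mp hww
    apply hlam
    refine lp.ext (funext fun i => ?_)
    have h3 : w i = 0 := by rw [hw0]; rfl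
    have h4 : conj (lam i) = 0 := h3
    simpa using congrArg conj h4
  · intro hND
    have hS_zero : (0 : lp (fun _ : ℕ => ℂ) 2) ∈ S :=
      ⟨0, 0, by simpa using summable_zero, by simpa using summable_zero, fun i => by simp⟩
    have hS_add : ∀ v w : lp (fun _ : ℕ => ℂ) 2, v ∈ S → w ∈ S → v + w ∈ S := by
      rintro v w ⟨ξ1, η1, hξ1, hη1, hv⟩ ⟨ξ2, η2, hξ2, hη2, hw⟩
      refine ⟨stmt2_il ξ1 ξ2, stmt2_il η1 η2,
        stmt2_il_summable_sq _ _ hξ1 hξ2, stmt2_il_summable_sq _ _ hη1 hη2, fun i => ?_⟩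
      rw [stmt2_il_tsum (a i) ξ1 η1 ξ2 η2 hξ1 hη1 hξ2 hη2, ← hv i, ← hw i]
      simp [lp.coeFn_add]
    have hS_smul : ∀ (c : ℂ) (v : lp (fun _ : ℕ => ℂ) 2), v ∈ S → c • v ∈ S := by
      rintro c v ⟨ξ, η, hξ, hη, hv⟩
      refine ⟨ξ, fun k => conj c • η k, hξ, ?_, fun i => ?_⟩
      · have : Summable fun k => ‖c‖ ^ 2 * ‖η k‖ ^ 2 := hη.mul_left _
        refine this.congr fun k => ?_
        rw [norm_smul]
        simp [mul_pow]
      · have h1 : ∀ k, (inner ℂ (conj c • η k) (a i (ξ k)) : ℂ) =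
            c * (inner ℂ (η k) (a i (ξ k)) : ℂ) := by
          intro k
          rw [inner_smul_left]
          simp
        rw [tsum_congr h1, tsum_mul_left, ← hv i]
        simp [lp.coeFn_smul]
    let K : Submodule ℂ (lp (fun _ : ℕ => ℂ) 2) :=
      { carrier := S
        add_mem' := fun hv hw => hS_add _ _ hv hw
        zero_mem' := hS_zero
        smul_mem' := fun c v hv => hS_smul c v hv }
    have hKne : Kᗮ ≠ ⊥ := by
      intro hbot
      exact hND (Submodule.dense_iff_topologicalClosure_eq_top.mpr
        (Submodule.topologicalClosure_eq_top_iff.mpr hbot))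
    obtain ⟨w, hwK, hw0⟩ := Submodule.exists_mem_ne_zero_of_ne_bot hKne
    set μ : ℕ → ℂ := fun i => conj (w i) with hμdef
    have hμsq : Summable fun i => ‖μ i‖ ^ 2 := by
      simpa [hμdef] using stmt2_sq_summable_of_memlp w
    have hTs : Summable (fun i => μ i • a i) := stmt2_summable_op a C hsum hcol μ hμsq
    set T : H →L[ℂ] H := ∑' i, μ i • a i with hTdef
    have hTsum : HasSum (fun i => μ i • a i) T := hTs.hasSum
    have hTzero : ∀ ξ0 η0 : H, (inner ℂ η0 (T ξ0) : ℂ) = 0 := by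
      intro ξ0 η0
      -- the rank-one element of S
      have hvm : Memℓp (fun i => (inner ℂ η0 (a i ξ0) : ℂ)) 2 :=
        stmt2_memlp_of_sq_summable _ (stmt2_rank_one_sq_summable a hsum ξ0 η0)
      set v : lp (fun _ : ℕ => ℂ) 2 := ⟨fun i => (inner ℂ η0 (a i ξ0) : ℂ), hvm⟩ with hvdef
      have hvS : v ∈ S := by
        refine ⟨fun k => if k = 0 then ξ0 else 0, fun k => if k = 0 then η0 else 0,
          ?_, ?_, fun i => ?_⟩
        · refine summable_of_ne_finset_zero (s := {0}) fun k hk => ?_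
          simp only [Finset.mem_singleton] at hk
          simp [hk]
        · refine summable_of_ne_finset_zero (s := {0}) fun k hk => ?_
          simp only [Finset.mem_singleton] at hk
          simp [hk]
        · rw [tsum_eq_single 0 (fun k hk => by simp [hk])]
          simp
          rfl
      have horth : (inner ℂ v w : ℂ) = 0 := (Submodule.mem_orthogonal K w).mp hwK v hvS
      have h4 : HasSum (fun i => (inner ℂ (v i) (w i) : ℂ)) 0 := by
        have h := lp.hasSum_inner (𝕜 := ℂ) v w
        rwa [horth] at h
      have h5 : HasSum (fun i => μ i * v i) 0 := by
        have h4s := h4.star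
        rw [star_zero] at h4s
        have hfg : (fun i => μ i * v i) = fun i => star ((inner ℂ (v i) (w i) : ℂ)) := by
          funext i
          simp [RCLike.inner_apply, hμdef, mul_comm]
        rw [hfg]
        exact h4s
      have h6 : HasSum (fun i => μ i * v i) (inner ℂ η0 (T ξ0) : ℂ) := by
        have ha1 := hTsum.mapL (ContinuousLinearMap.apply ℂ H ξ0)
        have ha2 := ha1.mapL (innerSL ℂ η0)
        simpa [ContinuousLinearMap.smul_apply, inner_smul_right] using ha2
      exact h6.unique h5
    have hT0 : T = 0 := by
      ext ξ0
      have h := inner_self_eq_zero.mp (hTzero ξ0 (T ξ0))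
      simpa using h
    refine ⟨⟨μ, stmt2_memlp_of_sq_summable μ hμsq⟩, ?_, ?_⟩
    · intro h
      apply hw0
      refine lp.ext (funext fun i => ?_)
      have h1 : μ i = 0 := by
        have h2 := congrArg (fun f : lp (fun _ : ℕ => ℂ) 2 => f i) h
        simpa using h2
      have h2 : conj (w i) = 0 := h1
      simpa using congrArg conj h2
    · show HasSum (fun i => μ i • a i) 0
      rwa [hT0] at hTsum
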